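/- Let A be a finite-dimensional commutative Frobenius C-algebra with semisimple basis (e_i)_{i=1}^r and nonzero values λ_i, and let Z_{g,n} = Σ_i λ_i^{2(g−1)+n} ê_i^{⊗n}. Then the separating gluing relation holds: for g = g_1 + g_2 and a splitting of the n inputs into groups of sizes n_1 and n_2, Z_{g,n}(a_1,...,a_n) = Σ_j Z_{g_1,n_1+1}(a's in group 1, f_j) · Z_{g_2,n_2+1}(a's in group 2, f^j), where (f_j), (f^j) are η-dual bases of A. -/

import Mathlib

open Finset

/-- Separating gluing relation for the TQFT functionals
`Z_{g,n} = ∑_i λ_i^{2(g−1)+n} ê_i^{⊗n}` of a commutative Frobenius `ℂ`-algebra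
with semisimple basis `b` and nonzero values `λ_i`: for `g = g₁ + g₂` and a
splitting of the `n = n₁ + n₂` inputs,
`Z_{g,n}(a) = ∑_j Z_{g₁,n₁+1}(a₁, f_j) · Z_{g₂,n₂+1}(a₂, f^j)`,
where `(f_j)`, `(f^j)` are `η`-dual bases of `A`. -/
theorem stmt10 (A : Type) [CommRing A] [Algebra ℂ A] (r : ℕ)
    (b : Module.Basis (Fin r) ℂ A)
    (η : LinearMap.BilinForm ℂ A)
    (hsym : ∀ x y : A, η x y = η y x)
    (hnd : ∀ x : A, (∀ y : A, η x y = 0) → x = 0)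
    (hinv : ∀ x y z : A, η (x * y) z = η x (y * z))
    (lam : Fin r → ℂ) (hlam : ∀ i, lam i ≠ 0)
    (hη : ∀ i j, η (b i) (b j) = if i = j then 1 else 0)
    (hmul : ∀ i j, b i * b j = if i = j then lam i • b i else 0)
    (g₁ g₂ n₁ n₂ : ℕ)
    (a₁ : Fin n₁ → A) (a₂ : Fin n₂ → A)
    (f : Module.Basis (Fin r) ℂ A) (fd : Fin r → A)
    (hfd : ∀ j k, η (f j) (fd k) = if j = k then 1 else 0) :
    ∑ i, lam i ^ (2 * (((g₁ : ℤ) + g₂) - 1) + (n₁ + n₂)) *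
        ((∏ k, b.coord i (a₁ k)) * ∏ k, b.coord i (a₂ k))
      = ∑ j,
          (∑ i, lam i ^ (2 * ((g₁ : ℤ) - 1) + (n₁ + 1)) *
            ((∏ k, b.coord i (a₁ k)) * b.coord i (f j))) *
          (∑ i, lam i ^ (2 * ((g₂ : ℤ) - 1) + (n₂ + 1)) *
            ((∏ k, b.coord i (a₂ k)) * b.coord i (fd j))) := by
  classical
  have hc : ∀ i (x : A), b.coord i x = η (b i) x := by
    intro i x
    conv_rhs => rw [← b.sum_repr x, map_sum]
    simp [hη, Finset.mul_sum, mul_ite]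
  have hrepr : ∀ (y : A) j, f.repr y j = η y (fd j) := by
    intro y j
    conv_rhs => rw [← f.sum_repr y]
    rw [map_sum, LinearMap.sum_apply]
    simp [hfd]
  have hdual : ∀ x y : A, ∑ j, η x (f j) * η y (fd j) = η x y := by
    intro x y
    conv_rhs => rw [← f.sum_repr y, map_sum]
    refine Finset.sum_congr rfl fun j _ => ?_
    rw [map_smul, hrepr]
    simp [mul_comm]
  simp only [hc]
  simp only [Finset.sum_mul_sum]
  rw [Finset.sum_comm]
  refine Finset.sum_congr rfl fun i _ => ?_
  rw [Finset.sum_comm]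
  have key : ∀ i' : Fin r,
      ∑ j, (lam i ^ (2 * ((g₁ : ℤ) - 1) + (n₁ + 1)) *
            ((∏ k, η (b i) (a₁ k)) * η (b i) (f j))) *
          (lam i' ^ (2 * ((g₂ : ℤ) - 1) + (n₂ + 1)) *
            ((∏ k, η (b i') (a₂ k)) * η (b i') (fd j)))
      = (lam i ^ (2 * ((g₁ : ℤ) - 1) + (n₁ + 1)) *
            (∏ k, η (b i) (a₁ k))) *
        (lam i' ^ (2 * ((g₂ : ℤ) - 1) + (n₂ + 1)) *
            (∏ k, η (b i') (a₂ k))) * (if i = i' then 1 else 0) := by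
    intro i'
    rw [← hη, ← hdual (b i) (b i'), Finset.mul_sum]
    refine Finset.sum_congr rfl fun j _ => ?_
    ring
  rw [Finset.sum_congr rfl fun i' _ => key i']
  simp only [mul_ite, mul_one, mul_zero]
  rw [Finset.sum_ite_eq Finset.univ i, if_pos (Finset.mem_univ i)]
  have hp : lam i ^ (2 * ((g₁ : ℤ) - 1) + (n₁ + 1)) * lam i ^ (2 * ((g₂ : ℤ) - 1) + (n₂ + 1))
      = lam i ^ (2 * (((g₁ : ℤ) + g₂) - 1) + (n₁ + n₂)) := by
    rw [← zpow_add₀ (hlam i)]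
    congr 1
    push_cast
    ring
  rw [← hp]
  ring
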